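/- Work in the ring S of formal power series over ℚ in three variables u, y, t. Let F ∈ S be the series whose coefficient of u^a y^b t^n equals the number of ascent sequences of length n with a ascents and b equal pairs. For k ≥ 1 set Δ_k = (1−ty)^k(1−u) + u(1+t−ty)^k, which has constant term 1 and hence is invertible in S, and set Γ_k = u(1+t−ty)^k Δ_k^{−1}. Then F = 1 + t(1−u)Δ₁^{−1} + Σ_{n≥1} t(1−u)(1−ty)^n(1+t−ty)^n Γ₁Γ₂⋯Γ_n Δ_n^{−1}Δ_{n+1}^{−1}, where the infinite sum is defined coefficientwise (the n-th summand is divisible by u^n, so each coefficient receives only finitely many contributions). -/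

import Mathlib

/-- Number of ascents in an integer sequence. -/
def ascList (l : List ℕ) : ℕ :=
  (List.range (l.length - 1)).countP (fun j => decide (l.getD j 0 < l.getD (j + 1) 0))

/-- Ascent sequence predicate. -/
def IsAscentSeq (l : List ℕ) : Prop :=
  l.getD 0 0 = 0 ∧ ∀ i, 0 < i → i < l.length → l.getD i 0 ≤ 1 + ascList (l.take i)

/-- Number of equal adjacent pairs. -/
def adjpairs (l : List ℕ) : ℕ :=
  (List.range (l.length - 1)).countP (fun j => decide (l.getD j 0 = l.getD (j + 1) 0))

/-- All runs of equal consecutive letters have length at most `k`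
(no `k+1` consecutive equal entries). -/
def RunsAtMost (k : ℕ) (l : List ℕ) : Prop :=
  ¬ ∃ i, i + k < l.length ∧ ∀ j ≤ k, l.getD (i + j) 0 = l.getD i 0

/-- Order-isomorphism of two partial orders on `Fin n`. -/
def PosetIso {n : ℕ} (P Q : PartialOrder (Fin n)) : Prop :=
  ∃ e : Fin n ≃ Fin n, ∀ a b, P.le a b ↔ Q.le (e a) (e b)

/-- The setoid of partial orders on `Fin n` satisfying `Φ`, up to isomorphism. -/
def posetSetoid (n : ℕ) (Φ : PartialOrder (Fin n) → Prop) :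
    Setoid {P : PartialOrder (Fin n) // Φ P} where
  r P Q := PosetIso P.1 Q.1
  iseqv := by
    constructor
    · intro P
      exact ⟨Equiv.refl _, fun a b => Iff.rfl⟩
    · rintro P Q ⟨e, he⟩
      refine ⟨e.symm, fun a b => ?_⟩
      simp only [he (e.symm a) (e.symm b), Equiv.apply_symm_apply]
    · rintro P Q R ⟨e, he⟩ ⟨f, hf⟩
      exact ⟨e.trans f, fun a b => (he a b).trans (hf (e a) (e b))⟩

/-- The number of isomorphism classes of partial orders on `n` elements satisfying `Φ`. -/
noncomputable def posetCount (n : ℕ) (Φ : PartialOrder (Fin n) → Prop) : ℕ :=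
  Nat.card (Quotient (posetSetoid n Φ))

/-- A poset is (2+2)-free. -/
def TwoTwoFree {n : ℕ} (P : PartialOrder (Fin n)) : Prop :=
  ¬ ∃ a b c d : Fin n, P.lt a b ∧ P.lt c d ∧
    ¬ P.le a c ∧ ¬ P.le c a ∧ ¬ P.le a d ∧ ¬ P.le d a ∧
    ¬ P.le b c ∧ ¬ P.le c b ∧ ¬ P.le b d ∧ ¬ P.le d b

/-- Two elements are indistinguishable: same strict down-set and same strict up-set. -/
def Indist {n : ℕ} (P : PartialOrder (Fin n)) (x y : Fin n) : Prop :=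
  (∀ z, P.lt z x ↔ P.lt z y) ∧ (∀ z, P.lt x z ↔ P.lt y z)

/-- Indistinguishability as a setoid. -/
def indistSetoid {n : ℕ} (P : PartialOrder (Fin n)) : Setoid (Fin n) where
  r := Indist P
  iseqv := ⟨fun _ => ⟨fun _ => Iff.rfl, fun _ => Iff.rfl⟩,
    fun h => ⟨fun z => (h.1 z).symm, fun z => (h.2 z).symm⟩,
    fun h h' => ⟨fun z => (h.1 z).trans (h'.1 z), fun z => (h.2 z).trans (h'.2 z)⟩⟩

/-- Size of the indistinguishability class of `x`. -/
noncomputable def classSize {n : ℕ} (P : PartialOrder (Fin n)) (x : Fin n) : ℕ :=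
  Nat.card {y : Fin n // Indist P x y}

/-- `maxindist(P) ≤ k`: each indistinguishability class has size at most `k`. -/
def MaxindistLe {n : ℕ} (P : PartialOrder (Fin n)) (k : ℕ) : Prop :=
  ∀ x : Fin n, classSize P x ≤ k

/-- No two distinct elements are indistinguishable. -/
def PrimitivePoset {n : ℕ} (P : PartialOrder (Fin n)) : Prop :=
  ∀ x y : Fin n, Indist P x y → x = y

/-- `rep(P)`: the minimum number of elements whose removal leaves an induced
subposet with no pair of distinct indistinguishable elements. -/
noncomputable def repStat {n : ℕ} (P : PartialOrder (Fin n)) : ℕ :=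
  sInf {m | ∃ S : Finset (Fin n), S.card = m ∧
    ∀ x ∉ S, ∀ y ∉ S, Indist P x y → x = y}

/-- The strict down-set of `x`. -/
def downSet {n : ℕ} (P : PartialOrder (Fin n)) (x : Fin n) : Set (Fin n) :=
  {z | P.lt z x}

/-- The level of `x`: the number of strict down-sets strictly contained in `D(x)`. -/
noncomputable def levelOf {n : ℕ} (P : PartialOrder (Fin n)) (x : Fin n) : ℕ :=
  {S : Set (Fin n) | (∃ z, S = downSet P z) ∧ S ⊂ downSet P x}.ncard

/-- `levels(P)`: index of the highest level. -/
noncomputable def levelsStat {n : ℕ} (P : PartialOrder (Fin n)) : ℕ :=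
  {S : Set (Fin n) | ∃ z, S = downSet P z}.ncard - 1

/-- `x` is a maximal element. -/
def IsMaximal {n : ℕ} (P : PartialOrder (Fin n)) (x : Fin n) : Prop :=
  ∀ z, ¬ P.lt x z

/-- `minmax(P)`: the minimum level of a maximal element. -/
noncomputable def minmaxStat {n : ℕ} (P : PartialOrder (Fin n)) : ℕ :=
  sInf {j | ∃ x, IsMaximal P x ∧ levelOf P x = j}

/-- Membership in `M_n`: upper triangular, no zero row or column, entries sum to `n`. -/
def InMatM (n : ℕ) (A : Σ d : ℕ, Matrix (Fin d) (Fin d) ℕ) : Prop :=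
  (∀ i j : Fin A.1, (j : ℕ) < (i : ℕ) → A.2 i j = 0) ∧
  (∀ i : Fin A.1, ∃ j, A.2 i j ≠ 0) ∧
  (∀ j : Fin A.1, ∃ i, A.2 i j ≠ 0) ∧
  (∑ i, ∑ j, A.2 i j) = n

/-- All entries are at most `k`. -/
def EntriesLe (k : ℕ) (A : Σ d : ℕ, Matrix (Fin d) (Fin d) ℕ) : Prop :=
  ∀ i j, A.2 i j ≤ k

/-- `index(A) - 1`: the least (0-based) row index with a nonzero entry in the last column. -/
noncomputable def matIndex0 (A : Σ d : ℕ, Matrix (Fin d) (Fin d) ℕ) : ℕ :=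
  sInf {i : ℕ | ∃ (h : i < A.1) (h' : A.1 - 1 < A.1), A.2 ⟨i, h⟩ ⟨A.1 - 1, h'⟩ ≠ 0}

/-- The number of nonzero entries of `A`. -/
noncomputable def matNZ (A : Σ d : ℕ, Matrix (Fin d) (Fin d) ℕ) : ℕ :=
  Nat.card {p : Fin A.1 × Fin A.1 // A.2 p.1 p.2 ≠ 0}

/-- Membership in `R_n`. -/
def InRset {n : ℕ} (π : Equiv.Perm (Fin n)) : Prop :=
  ¬ ∃ i j k : Fin n, (j : ℕ) = (i : ℕ) + 1 ∧ (i : ℕ) + 1 < (k : ℕ) ∧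
    (π k : ℕ) < (π i : ℕ) ∧ (π i : ℕ) < (π j : ℕ) ∧ (π i : ℕ) = (π k : ℕ) + 1

/-- No `k+1` consecutive letters, each one less than the previous. -/
def NoDescRun {n : ℕ} (k : ℕ) (π : Equiv.Perm (Fin n)) : Prop :=
  ¬ ∃ (i : ℕ) (h : i + k < n), ∀ j, ∀ hj : j ≤ k,
    (π ⟨i + j, by omega⟩ : ℕ) = (π ⟨i, by omega⟩ : ℕ) - j

/-- The number of descents by one: indices `i` with `π_i = π_{i+1} + 1`. -/
noncomputable def adjdes {n : ℕ} (π : Equiv.Perm (Fin n)) : ℕ :=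
  Nat.card {i : ℕ // ∃ h : i + 1 < n,
    (π ⟨i, Nat.lt_of_succ_lt h⟩ : ℕ) = (π ⟨i + 1, h⟩ : ℕ) + 1}

/-- A perfect matching, encoded as a fixed-point-free involution. -/
def IsMatching {m : ℕ} (f : Equiv.Perm (Fin m)) : Prop :=
  (∀ x, f (f x) = x) ∧ ∀ x, f x ≠ x

/-- The Stoimenow condition on a matching. -/
def IsStoimenow {m : ℕ} (f : Equiv.Perm (Fin m)) : Prop :=
  ¬ ∃ a c : Fin m, a < f a ∧ c < f c ∧
    (((a : ℕ) = (c : ℕ) + 1 ∧ f a < f c) ∨ ((a : ℕ) < (c : ℕ) ∧ (f a : ℕ) = (f c : ℕ) + 1))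

/-- There are `i, j` such that `{i+l, j+l}` is an arc for every `l = 0, …, k`. -/
def HasSimRun {m : ℕ} (k : ℕ) (f : Equiv.Perm (Fin m)) : Prop :=
  ∃ i j : ℕ, ∀ l ≤ k, ∃ (h1 : i + l < m) (h2 : j + l < m), f ⟨i + l, h1⟩ = ⟨j + l, h2⟩

/-- After removing the arcs with endpoints in `A`, no pair of similar arcs remains. -/
def SimilarFree {m : ℕ} (f : Equiv.Perm (Fin m)) (A : Finset (Fin m)) : Prop :=
  ¬ ∃ (i j : ℕ) (h1 : i < m) (h2 : j < m) (h3 : i + 1 < m) (h4 : j + 1 < m),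
    f ⟨i, h1⟩ = ⟨j, h2⟩ ∧ f ⟨i + 1, h3⟩ = ⟨j + 1, h4⟩ ∧
    (⟨i, h1⟩ : Fin m) ∉ A ∧ (⟨i + 1, h3⟩ : Fin m) ∉ A ∧
    (⟨j, h2⟩ : Fin m) ∉ A ∧ (⟨j + 1, h4⟩ : Fin m) ∉ A

/-- `echords(M)`: minimum number of arcs whose removal leaves no similar pair. -/
noncomputable def echords {m : ℕ} (f : Equiv.Perm (Fin m)) : ℕ :=
  sInf {c | ∃ A : Finset (Fin m), (∀ x ∈ A, f x ∈ A) ∧ A.card = 2 * c ∧ SimilarFree f A}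


namespace Stmt9

/-- `u`, `y`, `t` in `S = ℚ⟦u,y,t⟧`. -/
noncomputable def u : MvPowerSeries (Fin 3) ℚ := MvPowerSeries.X 0
noncomputable def y : MvPowerSeries (Fin 3) ℚ := MvPowerSeries.X 1
noncomputable def t : MvPowerSeries (Fin 3) ℚ := MvPowerSeries.X 2

/-- `F`: the coefficient of `u^a y^b t^n` is the number of ascent sequences of
length `n` with `a` ascents and `b` equal pairs. -/
noncomputable def F : MvPowerSeries (Fin 3) ℚ := fun m =>
  (Nat.card {l : List ℕ // l.length = m 2 ∧ IsAscentSeq l ∧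
    ascList l = m 0 ∧ adjpairs l = m 1} : ℚ)

noncomputable def Δ (k : ℕ) : MvPowerSeries (Fin 3) ℚ :=
  (1 - t * y) ^ k * (1 - u) + u * (1 + t - t * y) ^ k

noncomputable def Γ (k : ℕ) : MvPowerSeries (Fin 3) ℚ :=
  u * (1 + t - t * y) ^ k * (Δ k)⁻¹

/-- last element with default 0 -/
def lst (l : List ℕ) : ℕ := l.getD (l.length - 1) 0

lemma lst_append (l : List ℕ) (x : ℕ) : lst (l ++ [x]) = x := by
  unfold lst
  rw [List.length_append]
  simp only [List.length_singleton]
  rw [List.getD_append_right l [x] 0 (l.length + 1 - 1) (by omega)]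
  simp

lemma countP_range_succ (p : ℕ → Bool) (n : ℕ) :
    (List.range (n+1)).countP p = (List.range n).countP p + (if p n then 1 else 0) := by
  rw [List.range_succ, List.countP_append]
  simp [List.countP_cons]

lemma asc_append (l : List ℕ) (x : ℕ) (h : l ≠ []) :
    ascList (l ++ [x]) = ascList l + (if lst l < x then 1 else 0) := by
  have hl : 1 ≤ l.length := List.length_pos_iff.mpr h
  unfold ascList
  rw [List.length_append]
  simp only [List.length_singleton]
  have h1 : l.length + 1 - 1 = (l.length - 1) + 1 := by omega
  rw [h1, countP_range_succ]
  congr 1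
  · apply List.countP_congr
    intro j hj
    rw [List.mem_range] at hj
    rw [List.getD_append l [x] 0 j (by omega), List.getD_append l [x] 0 (j+1) (by omega)]
  · have h2 : (l ++ [x]).getD (l.length - 1) 0 = l.getD (l.length - 1) 0 :=
      List.getD_append l [x] 0 _ (by omega)
    have h3 : (l ++ [x]).getD (l.length - 1 + 1) 0 = x := by
      have : l.length - 1 + 1 = l.length := by omega
      rw [this, List.getD_append_right l [x] 0 l.length (le_refl _)]
      simp
    rw [h2, h3]
    unfold lst
    by_cases hc : l.getD (l.length - 1) 0 < x <;> simp [hc]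

lemma adj_append (l : List ℕ) (x : ℕ) (h : l ≠ []) :
    adjpairs (l ++ [x]) = adjpairs l + (if lst l = x then 1 else 0) := by
  have hl : 1 ≤ l.length := List.length_pos_iff.mpr h
  unfold adjpairs
  rw [List.length_append]
  simp only [List.length_singleton]
  have h1 : l.length + 1 - 1 = (l.length - 1) + 1 := by omega
  rw [h1, countP_range_succ]
  congr 1
  · apply List.countP_congr
    intro j hj
    rw [List.mem_range] at hj
    rw [List.getD_append l [x] 0 j (by omega), List.getD_append l [x] 0 (j+1) (by omega)]
  · have h2 : (l ++ [x]).getD (l.length - 1) 0 = l.getD (l.length - 1) 0 :=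
      List.getD_append l [x] 0 _ (by omega)
    have h3 : (l ++ [x]).getD (l.length - 1 + 1) 0 = x := by
      have : l.length - 1 + 1 = l.length := by omega
      rw [this, List.getD_append_right l [x] 0 l.length (le_refl _)]
      simp
    rw [h2, h3]
    unfold lst
    by_cases hc : l.getD (l.length - 1) 0 = x <;> simp [hc]

lemma isAscentSeq_append (l : List ℕ) (x : ℕ) (h : l ≠ []) :
    IsAscentSeq (l ++ [x]) ↔ IsAscentSeq l ∧ x ≤ 1 + ascList l := by
  have hl : 1 ≤ l.length := List.length_pos_iff.mpr h
  constructor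
  · rintro ⟨h0, hi⟩
    refine ⟨⟨?_, ?_⟩, ?_⟩
    · rwa [List.getD_append l [x] 0 0 (by omega)] at h0
    · intro i hi0 hil
      have := hi i hi0 (by rw [List.length_append]; simp; omega)
      rwa [List.getD_append l [x] 0 i (by omega),
        List.take_append_of_le_length (by omega)] at this
    · have := hi l.length (by omega) (by rw [List.length_append]; simp)
      rwa [List.getD_append_right l [x] 0 l.length (le_refl _),
        List.take_append_of_le_length (le_refl _), List.take_length,
        Nat.sub_self, List.getD_cons_zero] at this
  · rintro ⟨⟨h0, hi⟩, hx⟩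
    constructor
    · rwa [List.getD_append l [x] 0 0 (by omega)]
    · intro i hi0 hil
      rw [List.length_append, List.length_singleton] at hil
      rcases Nat.lt_or_ge i l.length with hc | hc
      · rw [List.getD_append l [x] 0 i (by omega),
          List.take_append_of_le_length (by omega)]
        exact hi i hi0 hc
      · have hieq : i = l.length := by omega
        subst hieq
        rw [List.getD_append_right l [x] 0 l.length (le_refl _),
          List.take_append_of_le_length (le_refl _), List.take_length,
          Nat.sub_self, List.getD_cons_zero]
        exact hx

lemma isAscentSeq_singleton (x : ℕ) : IsAscentSeq [x] ↔ x = 0 := by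
  constructor
  · rintro ⟨h0, _⟩; simpa using h0
  · rintro rfl
    exact ⟨rfl, by intro i h1 h2; simp at h2; omega⟩

lemma lst_le_asc : ∀ (l : List ℕ), IsAscentSeq l → l ≠ [] → lst l ≤ ascList l := by
  intro l
  induction l using List.reverseRecOn with
  | nil => intro _ h; exact absurd rfl h
  | append_singleton l x ih =>
    intro hA _
    rcases eq_or_ne l [] with rfl | hl
    · simp only [List.nil_append] at hA ⊢
      rw [isAscentSeq_singleton] at hA
      subst hA
      simp [lst]
    · rw [isAscentSeq_append l x hl] at hA
      obtain ⟨hA, hx⟩ := hA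
      rw [lst_append, asc_append l x hl]
      by_cases hc : lst l < x
      · simp only [hc, if_true]; omega
      · simp only [hc, if_false]
        have := ih hA hl
        omega


/-- Finset of ascent sequences of length `n`. -/
def AS : ℕ → Finset (List ℕ)
  | 0 => {[]}
  | 1 => {[0]}
  | (n+2) => (AS (n+1)).biUnion
      (fun l => (Finset.range (ascList l + 2)).image (fun x => l ++ [x]))

def gc (x a b n : ℕ) : ℕ :=
  ((AS n).filter (fun l => ascList l = a ∧ adjpairs l = b ∧ lst l = x)).card

lemma dropLast_append_lst {l : List ℕ} (h : l ≠ []) : l.dropLast ++ [lst l] = l := by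
  have h1 : lst l = l.getLast h := by
    unfold lst
    rw [List.getLast_eq_getElem]
    exact List.getD_eq_getElem l 0 (by have := List.length_pos_iff.mpr h; omega)
  rw [h1]
  exact List.dropLast_append_getLast h

lemma isAscentSeq_nil : IsAscentSeq [] := ⟨rfl, by intro i h1 h2; simp at h2⟩

lemma mem_AS : ∀ n (l : List ℕ), l ∈ AS n ↔ l.length = n ∧ IsAscentSeq l := by
  intro n
  induction n using Nat.strong_induction_on with
  | _ n ih =>
    match n with
    | 0 =>
      intro l
      simp only [AS, Finset.mem_singleton]
      constructor
      · rintro rfl; exact ⟨rfl, isAscentSeq_nil⟩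
      · rintro ⟨h1, _⟩; exact List.length_eq_zero_iff.mp h1
    | 1 =>
      intro l
      simp only [AS, Finset.mem_singleton]
      constructor
      · rintro rfl; exact ⟨rfl, (isAscentSeq_singleton 0).mpr rfl⟩
      · rintro ⟨h1, h2⟩
        obtain ⟨a, rfl⟩ := List.length_eq_one_iff.mp h1
        rw [isAscentSeq_singleton] at h2
        subst h2; rfl
    | (n+2) =>
      intro l
      simp only [AS, Finset.mem_biUnion, Finset.mem_image, Finset.mem_range]
      constructor
      · rintro ⟨l', hl', x, hx, rfl⟩
        rw [ih (n+1) (by omega)] at hl'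
        obtain ⟨hlen, hseq⟩ := hl'
        have hne : l' ≠ [] := by intro h; rw [h] at hlen; simp at hlen
        refine ⟨by simp [hlen], ?_⟩
        rw [isAscentSeq_append l' x hne]
        exact ⟨hseq, by omega⟩
      · rintro ⟨hlen, hseq⟩
        have hne : l ≠ [] := by intro h; rw [h] at hlen; simp at hlen
        have hdl := dropLast_append_lst hne
        have hlen2 : l.dropLast.length = n + 1 := by
          rw [List.length_dropLast, hlen]
          omega
        have hne2 : l.dropLast ≠ [] := by
          intro h; rw [h] at hlen2; simp at hlen2
        have hseq2 := hseq
        rw [← hdl, isAscentSeq_append _ _ hne2] at hseq2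
        exact ⟨l.dropLast, (ih (n+1) (by omega) _).mpr ⟨hlen2, hseq2.1⟩,
          lst l, by omega, hdl⟩

lemma AS_length {n : ℕ} {l : List ℕ} (h : l ∈ AS n) : l.length = n := ((mem_AS n l).mp h).1

lemma AS_ne_nil {n : ℕ} {l : List ℕ} (h : l ∈ AS (n+1)) : l ≠ [] := by
  intro he; have := AS_length h; rw [he] at this; simp at this

lemma gc_zero_of_lt {x a : ℕ} (h : a < x) (b n : ℕ) : gc x a b (n+1) = 0 := by
  unfold gc
  rw [Finset.card_eq_zero, Finset.filter_eq_empty_iff]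
  rintro l hl ⟨h1, _, h3⟩
  have := lst_le_asc l ((mem_AS _ l).mp hl).2 (AS_ne_nil hl)
  omega

lemma gc_base (x a b : ℕ) : gc x a b 1 = if x = 0 ∧ a = 0 ∧ b = 0 then 1 else 0 := by
  unfold gc
  have hAS : AS 1 = {([0] : List ℕ)} := rfl
  rw [hAS, Finset.filter_singleton]
  have ha : ascList [0] = 0 := rfl
  have hb : adjpairs [0] = 0 := rfl
  have hx : lst [0] = 0 := rfl
  rw [ha, hb, hx]
  by_cases h : x = 0 ∧ a = 0 ∧ b = 0
  · obtain ⟨rfl, rfl, rfl⟩ := h; simp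
  · rw [if_neg (by tauto), if_neg h]; simp

lemma sum_ind (s : Finset ℕ) (L : ℕ) (C : Prop) [Decidable C] :
    (∑ x' ∈ s, if C ∧ L = x' then 1 else 0) = if C ∧ L ∈ s then 1 else 0 := by
  by_cases hC : C
  · simp only [hC, true_and]
    exact Finset.sum_ite_eq s L (fun _ => 1)
  · simp [hC]

lemma card_filter_eq_ind (R xx : ℕ) (C : Prop) [Decidable C] :
    ((Finset.range R).filter (fun x' => C ∧ x' = xx)).card
      = if xx < R ∧ C then 1 else 0 := by
  by_cases hC : C
  · by_cases hx : xx < R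
    · rw [if_pos ⟨hx, hC⟩]
      have : (Finset.range R).filter (fun x' => C ∧ x' = xx) = {xx} := by
        ext y
        simp only [Finset.mem_filter, Finset.mem_range, Finset.mem_singleton, hC, true_and]
        constructor
        · rintro ⟨_, rfl⟩; rfl
        · rintro rfl; exact ⟨hx, rfl⟩
      rw [this]; rfl
    · rw [if_neg (by tauto)]
      rw [Finset.card_eq_zero, Finset.filter_eq_empty_iff]
      rintro y hy ⟨_, rfl⟩
      rw [Finset.mem_range] at hy
      exact hx hy
  · simp [hC]

lemma gc_card_sum (x a b n : ℕ) :
    gc x a b n = ∑ l ∈ AS n,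
      (if ascList l = a ∧ adjpairs l = b ∧ lst l = x then 1 else 0) := by
  unfold gc
  rw [Finset.card_filter]

lemma gc_rec (x a b n : ℕ) :
    gc x a b (n+2) = (if 0 < b then gc x a (b-1) (n+1) else 0)
      + (if x ≤ a then ∑ x' ∈ Finset.range x, gc x' (a-1) b (n+1) else 0)
      + ∑ x' ∈ Finset.Icc (x+1) a, gc x' a b (n+1) := by
  classical
  have key : gc x a b (n+2) = ∑ l ∈ AS (n+1),
      (if x < ascList l + 2 ∧ (ascList l + (if lst l < x then 1 else 0) = a ∧
          adjpairs l + (if lst l = x then 1 else 0) = b) then 1 else 0) := by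
    unfold gc
    have hsplit : (AS (n+2)).filter (fun l => ascList l = a ∧ adjpairs l = b ∧ lst l = x)
        = (AS (n+1)).biUnion (fun l =>
            ((Finset.range (ascList l + 2)).filter
              (fun x' => (ascList l + (if lst l < x then 1 else 0) = a ∧
                adjpairs l + (if lst l = x then 1 else 0) = b) ∧ x' = x)).image
              (fun x' => l ++ [x'])) := by
      ext y
      simp only [AS, Finset.mem_filter, Finset.mem_biUnion, Finset.mem_image, Finset.mem_range]
      constructor
      · rintro ⟨⟨l, hl, x', hx', rfl⟩, h1, h2, h3⟩
        have hne := AS_ne_nil hl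
        rw [lst_append] at h3
        rw [asc_append l x' hne] at h1
        rw [adj_append l x' hne] at h2
        refine ⟨l, hl, x', ⟨hx', ⟨?_, ?_⟩, h3⟩, rfl⟩
        · rw [← h3]; exact h1
        · rw [← h3]; exact h2
      · rintro ⟨l, hl, x', ⟨hx', ⟨h1, h2⟩, hxx⟩, rfl⟩
        have hne := AS_ne_nil hl
        refine ⟨⟨l, hl, x', hx', rfl⟩, ?_, ?_, by rw [lst_append]; exact hxx⟩
        · rw [asc_append l x' hne, hxx]; exact h1
        · rw [adj_append l x' hne, hxx]; exact h2
    rw [hsplit, Finset.card_biUnion]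
    · apply Finset.sum_congr rfl
      intro l hl
      rw [Finset.card_image_of_injOn (fun p _ q _ h => by
        simpa using List.append_cancel_left h)]
      rw [card_filter_eq_ind]
    · intro l1 h1 l2 h2 hne
      rw [Function.onFun, Finset.disjoint_left]
      rintro y hy1 hy2
      simp only [Finset.mem_image, Finset.mem_filter] at hy1 hy2
      obtain ⟨x1, _, rfl⟩ := hy1
      obtain ⟨x2, _, heq⟩ := hy2
      have hlen : l2.length = l1.length := by rw [AS_length h1, AS_length h2]
      exact hne ((List.append_inj heq hlen).1.symm)
  rw [key]
  -- now rewrite RHS as sum of indicators over AS (n+1) and compare pointwise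
  have e1 : (if 0 < b then gc x a (b-1) (n+1) else 0)
      = ∑ l ∈ AS (n+1), (if 0 < b ∧ (ascList l = a ∧ adjpairs l = b-1 ∧ lst l = x)
          then 1 else 0) := by
    by_cases hb : 0 < b
    · simp only [hb, true_and, if_true]; exact gc_card_sum x a (b-1) (n+1)
    · simp [hb]
  have swap : ∀ (s : Finset ℕ) (a' b' : ℕ),
      (∑ x' ∈ s, gc x' a' b' (n+1))
        = ∑ l ∈ AS (n+1), (if (ascList l = a' ∧ adjpairs l = b') ∧ lst l ∈ s
            then 1 else 0) := by
    intro s a' b'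
    rw [Finset.sum_congr rfl (fun x' _ => gc_card_sum x' a' b' (n+1)), Finset.sum_comm]
    apply Finset.sum_congr rfl
    intro l _
    rw [← sum_ind s (lst l) (ascList l = a' ∧ adjpairs l = b')]
    apply Finset.sum_congr rfl
    intro x' _
    congr 1
    simp only [eq_iff_iff, and_assoc]
  have e2 : (if x ≤ a then ∑ x' ∈ Finset.range x, gc x' (a-1) b (n+1) else 0)
      = ∑ l ∈ AS (n+1), (if x ≤ a ∧ ((ascList l = a-1 ∧ adjpairs l = b) ∧
          lst l ∈ Finset.range x) then 1 else 0) := by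
    by_cases hxa : x ≤ a
    · simp only [hxa, true_and, if_true]
      exact swap (Finset.range x) (a-1) b
    · simp [hxa]
  have e3 : (∑ x' ∈ Finset.Icc (x+1) a, gc x' a b (n+1))
      = ∑ l ∈ AS (n+1), (if (ascList l = a ∧ adjpairs l = b) ∧
          lst l ∈ Finset.Icc (x+1) a then 1 else 0) := swap _ a b
  rw [e1, e2, e3, ← Finset.sum_add_distrib, ← Finset.sum_add_distrib]
  apply Finset.sum_congr rfl
  intro l hl
  have hLA : lst l ≤ ascList l := lst_le_asc l ((mem_AS _ l).mp hl).2 (AS_ne_nil hl)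
  simp only [Finset.mem_range, Finset.mem_Icc]
  split_ifs <;> omega


lemma gc_rec' (x a b n : ℕ) (hxa : x ≤ a) (hn : 1 ≤ n) :
    gc x a b n = (if x = 0 ∧ a = 0 ∧ b = 0 ∧ n = 1 then 1 else 0)
      + (if 1 ≤ b ∧ 1 ≤ n - 1 then gc x a (b-1) (n-1) else 0)
      + (if 1 ≤ n - 1 then ∑ x' ∈ Finset.range x, gc x' (a-1) b (n-1) else 0)
      + (if 1 ≤ n - 1 then ∑ x' ∈ Finset.Icc (x+1) a, gc x' a b (n-1) else 0) := by
  rcases Nat.lt_or_ge n 2 with h2 | h2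
  · have hn1 : n = 1 := by omega
    subst hn1
    rw [gc_base]
    have hz : ¬ (1 ≤ b ∧ 1 ≤ 1 - 1) := by omega
    rw [if_neg hz, if_neg (by omega : ¬ (1 ≤ 1 - 1)), if_neg (by omega : ¬ (1 ≤ 1 - 1))]
    by_cases h : x = 0 ∧ a = 0 ∧ b = 0
    · rw [if_pos h, if_pos ⟨h.1, h.2.1, h.2.2, rfl⟩]
    · rw [if_neg h, if_neg (by tauto)]
  · obtain ⟨k, rfl⟩ : ∃ k, n = k + 2 := ⟨n - 2, by omega⟩
    rw [gc_rec x a b k]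
    have e1 : k + 2 - 1 = k + 1 := by omega
    rw [e1, if_neg (by omega : ¬ (x = 0 ∧ a = 0 ∧ b = 0 ∧ k + 2 = 1)), if_pos hxa,
      if_pos (by omega : 1 ≤ k + 1), if_pos (by omega : 1 ≤ k + 1)]
    have e2 : (if 1 ≤ b ∧ 1 ≤ k + 1 then gc x a (b-1) (k+1) else 0)
        = (if 0 < b then gc x a (b-1) (k+1) else 0) := by
      by_cases hb : 0 < b
      · rw [if_pos ⟨hb, by omega⟩, if_pos hb]
      · rw [if_neg (by omega), if_neg hb]
    rw [e2]
    ring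

noncomputable def g (x a : ℕ) : MvPowerSeries (Fin 3) ℚ :=
  fun m => if m 0 = a ∧ 1 ≤ m 2 then (gc x a (m 1) (m 2) : ℚ) else 0

lemma coeff_g (x a : ℕ) (m : Fin 3 →₀ ℕ) :
    MvPowerSeries.coeff m (g x a)
      = if m 0 = a ∧ 1 ≤ m 2 then (gc x a (m 1) (m 2) : ℚ) else 0 :=
  rfl

lemma coeff_X_mul' (i : Fin 3) (f : MvPowerSeries (Fin 3) ℚ) (m : Fin 3 →₀ ℕ) :
    MvPowerSeries.coeff m (MvPowerSeries.X i * f)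
      = if 1 ≤ m i then MvPowerSeries.coeff (m - Finsupp.single i 1) f else 0 := by
  rw [show (MvPowerSeries.X i : MvPowerSeries (Fin 3) ℚ)
      = MvPowerSeries.monomial (Finsupp.single i 1) 1 from rfl,
    MvPowerSeries.coeff_monomial_mul]
  by_cases h : 1 ≤ m i
  · rw [if_pos (Finsupp.single_le_iff.mpr h), if_pos h, one_mul]
  · rw [if_neg (fun hc => h (Finsupp.single_le_iff.mp hc)), if_neg h]

lemma sub_single_apply (m : Fin 3 →₀ ℕ) (i j : Fin 3) :
    ((m - Finsupp.single i 1 : Fin 3 →₀ ℕ)) j = if i = j then m j - 1 else m j := by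
  rw [Finsupp.tsub_apply, Finsupp.single_apply]
  split_ifs <;> simp

lemma ss0 (m : Fin 3 →₀ ℕ) : ((m - Finsupp.single (0 : Fin 3) 1 : Fin 3 →₀ ℕ)) 0 = m 0 - 1 := by
  rw [sub_single_apply, if_pos rfl]
lemma ss0' (m : Fin 3 →₀ ℕ) : (((m - Finsupp.single (0 : Fin 3) 1 : Fin 3 →₀ ℕ)) 1 = m 1)
    ∧ (((m - Finsupp.single (0 : Fin 3) 1 : Fin 3 →₀ ℕ)) 2 = m 2) := by
  constructor <;> rw [sub_single_apply, if_neg (by decide)]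
lemma ss1 (m : Fin 3 →₀ ℕ) : ((m - Finsupp.single (1 : Fin 3) 1 : Fin 3 →₀ ℕ)) 1 = m 1 - 1 := by
  rw [sub_single_apply, if_pos rfl]
lemma ss1' (m : Fin 3 →₀ ℕ) : (((m - Finsupp.single (1 : Fin 3) 1 : Fin 3 →₀ ℕ)) 0 = m 0)
    ∧ (((m - Finsupp.single (1 : Fin 3) 1 : Fin 3 →₀ ℕ)) 2 = m 2) := by
  constructor <;> rw [sub_single_apply, if_neg (by decide)]
lemma ss2 (m : Fin 3 →₀ ℕ) : ((m - Finsupp.single (2 : Fin 3) 1 : Fin 3 →₀ ℕ)) 2 = m 2 - 1 := by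
  rw [sub_single_apply, if_pos rfl]
lemma ss2' (m : Fin 3 →₀ ℕ) : (((m - Finsupp.single (2 : Fin 3) 1 : Fin 3 →₀ ℕ)) 0 = m 0)
    ∧ (((m - Finsupp.single (2 : Fin 3) 1 : Fin 3 →₀ ℕ)) 1 = m 1) := by
  constructor <;> rw [sub_single_apply, if_neg (by decide)]

lemma coeff_g_sum (s : Finset ℕ) (a : ℕ) (m' : Fin 3 →₀ ℕ) :
    ∑ x' ∈ s, MvPowerSeries.coeff m' (g x' a)
      = if m' 0 = a ∧ 1 ≤ m' 2 then ((∑ x' ∈ s, gc x' a (m' 1) (m' 2) : ℕ) : ℚ) else 0 := by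
  simp only [coeff_g]
  by_cases hC : m' 0 = a ∧ 1 ≤ m' 2
  · simp [hC]
  · simp [hC]

lemma coeff_t (m : Fin 3 →₀ ℕ) :
    MvPowerSeries.coeff m t = if m = Finsupp.single 2 1 then 1 else 0 :=
  MvPowerSeries.coeff_X m 2

lemma single21_apply : (Finsupp.single (2 : Fin 3) 1 : Fin 3 →₀ ℕ) 0 = 0 ∧
    (Finsupp.single (2 : Fin 3) 1 : Fin 3 →₀ ℕ) 1 = 0 ∧
    (Finsupp.single (2 : Fin 3) 1 : Fin 3 →₀ ℕ) 2 = 1 := by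
  refine ⟨?_, ?_, ?_⟩ <;> rw [Finsupp.single_apply]
  · rw [if_neg (by decide)]
  · rw [if_neg (by decide)]
  · rw [if_pos rfl]

lemma eq_single21_iff (m : Fin 3 →₀ ℕ) :
    m = Finsupp.single 2 1 ↔ (m 0 = 0 ∧ m 1 = 0 ∧ m 2 = 1) := by
  constructor
  · rintro rfl
    exact single21_apply
  · rintro ⟨h0, h1, h2⟩
    ext j
    fin_cases j
    · simpa using h0.trans single21_apply.1.symm
    · simpa using h1.trans single21_apply.2.1.symm
    · simpa using h2.trans single21_apply.2.2.symm

lemma g_rec (x a : ℕ) (hxa : x ≤ a) :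
    g x a = (if x = 0 ∧ a = 0 then t else 0) + t * (y * g x a)
      + u * (t * ∑ x' ∈ Finset.range x, g x' (a-1))
      + t * ∑ x' ∈ Finset.Icc (x+1) a, g x' a := by
  apply MvPowerSeries.ext; intro m
  rw [map_add, map_add, map_add]
  have hbase : MvPowerSeries.coeff m (if x = 0 ∧ a = 0 then t else 0)
      = if (x = 0 ∧ a = 0) ∧ (m 0 = 0 ∧ m 1 = 0 ∧ m 2 = 1) then 1 else 0 := by
    by_cases h : x = 0 ∧ a = 0
    · simp only [h, if_true, true_and, coeff_t, eq_single21_iff]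
    · simp [h]
  have h1 : MvPowerSeries.coeff m (t * (y * g x a))
      = if 1 ≤ m 2 ∧ 1 ≤ m 1 ∧ m 0 = a ∧ 1 ≤ m 2 - 1
        then (gc x a (m 1 - 1) (m 2 - 1) : ℚ) else 0 := by
    rw [show t * (y * g x a) = MvPowerSeries.X 2 * (MvPowerSeries.X 1 * g x a) from rfl,
      coeff_X_mul']
    by_cases hm2 : 1 ≤ m 2
    · rw [if_pos hm2, coeff_X_mul', coeff_g]
      simp only [sub_single_apply, show ((2:Fin 3) = 0) = False from by simp,
        show ((2:Fin 3) = 1) = False from by simp, show ((2:Fin 3) = 2) = True from by simp,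
        show ((0:Fin 3) = 0) = True from by simp, show ((0:Fin 3) = 1) = False from by simp,
        show ((0:Fin 3) = 2) = False from by simp, show ((1:Fin 3) = 0) = False from by simp,
        show ((1:Fin 3) = 1) = True from by simp, show ((1:Fin 3) = 2) = False from by simp,
        if_true, if_false]
      by_cases hm1 : 1 ≤ m 1
      · rw [if_pos hm1]
        by_cases hc : m 0 = a ∧ 1 ≤ m 2 - 1
        · rw [if_pos hc, if_pos ⟨hm2, hm1, hc.1, hc.2⟩]
        · rw [if_neg hc, if_neg (by tauto)]
      · rw [if_neg hm1, if_neg (by tauto)]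
    · rw [if_neg hm2, if_neg (by tauto)]
  have h2 : MvPowerSeries.coeff m (u * (t * ∑ x' ∈ Finset.range x, g x' (a-1)))
      = if 1 ≤ m 0 ∧ 1 ≤ m 2 ∧ m 0 - 1 = a - 1 ∧ 1 ≤ m 2 - 1
        then ((∑ x' ∈ Finset.range x, gc x' (a-1) (m 1) (m 2 - 1) : ℕ) : ℚ) else 0 := by
    rw [show u * (t * ∑ x' ∈ Finset.range x, g x' (a-1))
        = MvPowerSeries.X 0 * (MvPowerSeries.X 2 * ∑ x' ∈ Finset.range x, g x' (a-1))
        from rfl, coeff_X_mul']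
    by_cases hm0 : 1 ≤ m 0
    · rw [if_pos hm0, coeff_X_mul']
      have hsa : ((m - Finsupp.single (0:Fin 3) 1 : Fin 3 →₀ ℕ)) 2 = m 2 := by
        rw [sub_single_apply, if_neg (by simp)]
      rw [hsa, map_sum, coeff_g_sum]
      simp only [sub_single_apply, show ((2:Fin 3) = 0) = False from by simp,
        show ((2:Fin 3) = 1) = False from by simp, show ((2:Fin 3) = 2) = True from by simp,
        show ((0:Fin 3) = 0) = True from by simp, show ((0:Fin 3) = 1) = False from by simp,
        show ((0:Fin 3) = 2) = False from by simp, show ((1:Fin 3) = 0) = False from by simp,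
        show ((1:Fin 3) = 1) = True from by simp, show ((1:Fin 3) = 2) = False from by simp,
        if_true, if_false]
      by_cases hm2 : 1 ≤ m 2
      · rw [if_pos hm2]
        by_cases hc : m 0 - 1 = a - 1 ∧ 1 ≤ m 2 - 1
        · rw [if_pos hc, if_pos ⟨hm0, hm2, hc.1, hc.2⟩]
        · rw [if_neg hc, if_neg (by tauto)]
      · rw [if_neg hm2, if_neg (by tauto)]
    · rw [if_neg hm0, if_neg (by tauto)]
  have h3 : MvPowerSeries.coeff m (t * ∑ x' ∈ Finset.Icc (x+1) a, g x' a)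
      = if 1 ≤ m 2 ∧ m 0 = a ∧ 1 ≤ m 2 - 1
        then ((∑ x' ∈ Finset.Icc (x+1) a, gc x' a (m 1) (m 2 - 1) : ℕ) : ℚ) else 0 := by
    rw [show t * ∑ x' ∈ Finset.Icc (x+1) a, g x' a
        = MvPowerSeries.X 2 * ∑ x' ∈ Finset.Icc (x+1) a, g x' a from rfl, coeff_X_mul']
    by_cases hm2 : 1 ≤ m 2
    · rw [if_pos hm2, map_sum, coeff_g_sum]
      simp only [sub_single_apply, show ((2:Fin 3) = 0) = False from by simp,
        show ((2:Fin 3) = 1) = False from by simp, show ((2:Fin 3) = 2) = True from by simp,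
        show ((0:Fin 3) = 0) = True from by simp, show ((0:Fin 3) = 1) = False from by simp,
        show ((0:Fin 3) = 2) = False from by simp, show ((1:Fin 3) = 0) = False from by simp,
        show ((1:Fin 3) = 1) = True from by simp, show ((1:Fin 3) = 2) = False from by simp,
        if_true, if_false]
      by_cases hc : m 0 = a ∧ 1 ≤ m 2 - 1
      · rw [if_pos hc, if_pos ⟨hm2, hc.1, hc.2⟩]
      · rw [if_neg hc, if_neg (by tauto)]
    · rw [if_neg hm2, if_neg (by tauto)]
  rw [hbase, h1, h2, h3, coeff_g]
  by_cases hC : m 0 = a ∧ 1 ≤ m 2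
  · obtain ⟨h0, hm2⟩ := hC
    rw [if_pos ⟨h0, hm2⟩, gc_rec' x a (m 1) (m 2) hxa hm2]
    push_cast
    rcases Nat.eq_zero_or_pos x with hx0 | hxpos
    · subst hx0
      simp only [Finset.range_zero, Finset.sum_empty, Nat.cast_zero, ite_self, add_zero]
      congr 1
      · congr 1
        · exact if_congr (by subst h0; tauto) rfl rfl
        · exact if_congr (by subst h0; tauto) rfl rfl
      · exact if_congr (by subst h0; tauto) rfl rfl
    · have hapos : 1 ≤ a := le_trans hxpos hxa
      congr 1
      · congr 1
        · congr 1
          · exact if_congr (by constructor <;> (intro hh; omega)) rfl rfl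
          · exact if_congr (by constructor <;> (intro hh; omega)) rfl rfl
        · exact if_congr (by constructor <;> (intro hh; omega)) rfl rfl
      · exact if_congr (by constructor <;> (intro hh; omega)) rfl rfl
  · rw [if_neg hC]
    have e0 : ¬ ((x = 0 ∧ a = 0) ∧ (m 0 = 0 ∧ m 1 = 0 ∧ m 2 = 1)) := by
      rintro ⟨⟨_, ha0⟩, h0', _, h2'⟩; exact hC ⟨by omega, by omega⟩
    have e1 : ¬ (1 ≤ m 2 ∧ 1 ≤ m 1 ∧ m 0 = a ∧ 1 ≤ m 2 - 1) := by
      rintro ⟨p1, _, p3, _⟩; exact hC ⟨p3, p1⟩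
    have e3 : ¬ (1 ≤ m 2 ∧ m 0 = a ∧ 1 ≤ m 2 - 1) := by
      rintro ⟨p1, p2, _⟩; exact hC ⟨p2, p1⟩
    rw [if_neg e0, if_neg e1, if_neg e3]
    rcases Nat.eq_zero_or_pos x with hx0 | hxpos
    · subst hx0
      simp
    · have hapos : 1 ≤ a := le_trans hxpos hxa
      have e2 : ¬ (1 ≤ m 0 ∧ 1 ≤ m 2 ∧ m 0 - 1 = a - 1 ∧ 1 ≤ m 2 - 1) := by
        rintro ⟨p1, p2, p3, _⟩; exact hC ⟨by omega, p2⟩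
      rw [if_neg e2]
      norm_num



lemma g_top {x a : ℕ} (h : a < x) : g x a = 0 := by
  apply MvPowerSeries.ext; intro m
  rw [map_zero, coeff_g]
  by_cases hc : m 0 = a ∧ 1 ≤ m 2
  · obtain ⟨h1, h2⟩ := hc
    have hg : gc x a (m 1) (m 2) = 0 := by
      obtain ⟨n, hn⟩ : ∃ n, m 2 = n + 1 := ⟨m 2 - 1, by omega⟩
      rw [hn]
      exact gc_zero_of_lt h _ _
    rw [if_pos ⟨h1, h2⟩, hg]
    norm_num
  · rw [if_neg hc]

noncomputable def A : MvPowerSeries (Fin 3) ℚ := 1 - t * y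
noncomputable def B : MvPowerSeries (Fin 3) ℚ := A + t

noncomputable def Pa (a : ℕ) (v : MvPowerSeries (Fin 3) ℚ) : MvPowerSeries (Fin 3) ℚ :=
  ∑ x ∈ Finset.range (a+1), g x a * v^x

noncomputable def G1 (a : ℕ) : MvPowerSeries (Fin 3) ℚ :=
  ∑ x ∈ Finset.range (a+1), g x a

lemma tri1 (f w : ℕ → MvPowerSeries (Fin 3) ℚ) (n : ℕ) :
    (∑ x ∈ Finset.range n, (∑ x' ∈ Finset.range x, f x') * w x)
      = ∑ x' ∈ Finset.range n, f x' * (∑ x ∈ Finset.Ico (x'+1) n, w x) := by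
  induction n with
  | zero => simp
  | succ n ih =>
    rw [Finset.sum_range_succ, ih,
      Finset.sum_range_succ (fun x' => f x' * ∑ x ∈ Finset.Ico (x'+1) (n+1), w x) n]
    have htop : (∑ x ∈ Finset.Ico (n+1) (n+1), w x) = 0 := by
      rw [Finset.Ico_self, Finset.sum_empty]
    rw [htop, mul_zero, add_zero]
    have hstep : ∀ x' ∈ Finset.range n,
        f x' * (∑ x ∈ Finset.Ico (x'+1) (n+1), w x)
          = f x' * (∑ x ∈ Finset.Ico (x'+1) n, w x) + f x' * w n := by
      intro x' hx'
      rw [Finset.mem_range] at hx'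
      rw [Finset.sum_Ico_succ_top (by omega), mul_add]
    rw [Finset.sum_congr rfl hstep, Finset.sum_add_distrib, ← Finset.sum_mul]

lemma tri2 (f w : ℕ → MvPowerSeries (Fin 3) ℚ) (n : ℕ) :
    (∑ x ∈ Finset.range n, (∑ x' ∈ Finset.Ico (x+1) n, f x') * w x)
      = ∑ x' ∈ Finset.range n, f x' * (∑ x ∈ Finset.range x', w x) := by
  have h := (tri1 w f n).symm
  calc (∑ x ∈ Finset.range n, (∑ x' ∈ Finset.Ico (x+1) n, f x') * w x)
      = ∑ x ∈ Finset.range n, w x * (∑ x' ∈ Finset.Ico (x+1) n, f x') :=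
        Finset.sum_congr rfl (fun x _ => mul_comm _ _)
    _ = ∑ x ∈ Finset.range n, (∑ x' ∈ Finset.range x, w x') * f x := h
    _ = ∑ x' ∈ Finset.range n, f x' * (∑ x ∈ Finset.range x', w x) :=
        Finset.sum_congr rfl (fun x _ => mul_comm _ _)

lemma geo (v : MvPowerSeries (Fin 3) ℚ) (i j : ℕ) (hij : i ≤ j) :
    (1 - v) * (∑ x ∈ Finset.Ico i j, v^x) = v^i - v^j := by
  induction j, hij using Nat.le_induction with
  | base => rw [Finset.Ico_self, Finset.sum_empty, mul_zero, sub_self]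
  | succ j hij ih =>
    rw [Finset.sum_Ico_succ_top hij, mul_add, ih, pow_succ]
    ring

lemma geo0 (v : MvPowerSeries (Fin 3) ℚ) (n : ℕ) :
    (1 - v) * (∑ x ∈ Finset.range n, v^x) = 1 - v^n := by
  rw [Finset.range_eq_Ico, geo v 0 n (Nat.zero_le n), pow_zero]

lemma dagger0 (v : MvPowerSeries (Fin 3) ℚ) :
    Pa 0 v * (B - A * v) = t * (1 - v) + t * G1 0 := by
  have h00 : A * g 0 0 = t := by
    have h := g_rec 0 0 (le_refl 0)
    rw [Finset.range_zero, Finset.sum_empty, Finset.Icc_eq_empty (by omega),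
      Finset.sum_empty, if_pos (⟨rfl, rfl⟩ : (0:ℕ) = 0 ∧ (0:ℕ) = 0)] at h
    unfold A
    linear_combination h
  have hPa : Pa 0 v = g 0 0 := by
    unfold Pa
    rw [Finset.sum_range_one, pow_zero, mul_one]
  have hG : G1 0 = g 0 0 := by
    unfold G1
    rw [Finset.sum_range_one]
  have hB : B = A + t := rfl
  rw [hPa, hG]
  linear_combination (1 - v) * h00 + (g 0 0) * hB

lemma daggerS (a : ℕ) (v : MvPowerSeries (Fin 3) ℚ) :
    Pa (a+1) v * (B - A * v)
      = u * t * v * Pa a v - u * t * v^(a+2) * G1 a + t * G1 (a+1) := by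
  set S1 := ∑ x ∈ Finset.range (a+2), (∑ x' ∈ Finset.range x, g x' a) * v^x with hS1def
  set S2 := ∑ x ∈ Finset.range (a+2),
    (∑ x' ∈ Finset.Ico (x+1) (a+2), g x' (a+1)) * v^x with hS2def
  have step1 : ∀ x ∈ Finset.range (a+2), A * (g x (a+1) * v^x)
      = u * t * ((∑ x' ∈ Finset.range x, g x' a) * v^x)
        + t * ((∑ x' ∈ Finset.Ico (x+1) (a+2), g x' (a+1)) * v^x) := by
    intro x hx
    rw [Finset.mem_range] at hx
    have h := g_rec x (a+1) (by omega)
    rw [if_neg (by omega)] at h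
    have hicc : Finset.Icc (x+1) (a+1) = Finset.Ico (x+1) (a+2) := by
      rw [← Finset.Ico_add_one_right_eq_Icc]
      rfl
    rw [hicc] at h
    have ha1 : a + 1 - 1 = a := by omega
    rw [ha1] at h
    unfold A
    linear_combination (v^x) * h
  have master : A * Pa (a+1) v = u * t * S1 + t * S2 := by
    unfold Pa
    rw [Finset.mul_sum, Finset.sum_congr rfl step1, Finset.sum_add_distrib,
      hS1def, hS2def, Finset.mul_sum, Finset.mul_sum]
  have hswap1 : S1 = ∑ x' ∈ Finset.range (a+1), g x' a * (∑ x ∈ Finset.Ico (x'+1) (a+2), v^x) := by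
    rw [hS1def, tri1, Finset.sum_range_succ, g_top (by omega : a < a + 1), zero_mul, add_zero]
  have hswap2 : S2 = ∑ x' ∈ Finset.range (a+2), g x' (a+1) * (∑ x ∈ Finset.range x', v^x) := by
    rw [hS2def, tri2]
  have hgeo1 : (1 - v) * S1 = v * Pa a v - v^(a+2) * G1 a := by
    rw [hswap1, Finset.mul_sum]
    rw [Finset.sum_congr rfl (fun x' hx' => by
      rw [show (1-v) * (g x' a * (∑ x ∈ Finset.Ico (x'+1) (a+2), v^x))
          = g x' a * ((1-v) * (∑ x ∈ Finset.Ico (x'+1) (a+2), v^x)) by ring,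
        geo v (x'+1) (a+2) (by rw [Finset.mem_range] at hx'; omega), pow_succ,
        show g x' a * (v ^ x' * v - v ^ (a + 2)) = v * (g x' a * v ^ x')
          - v^(a+2) * g x' a by ring])]
    rw [Finset.sum_sub_distrib, ← Finset.mul_sum, ← Finset.mul_sum]
    unfold Pa G1
    rfl
  have hgeo2 : (1 - v) * S2 = G1 (a+1) - Pa (a+1) v := by
    rw [hswap2, Finset.mul_sum]
    rw [Finset.sum_congr rfl (fun x' hx' => by
      rw [show (1-v) * (g x' (a+1) * (∑ x ∈ Finset.range x', v^x))
          = g x' (a+1) * ((1-v) * (∑ x ∈ Finset.range x', v^x)) by ring,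
        geo0, mul_sub, mul_one])]
    rw [Finset.sum_sub_distrib]
    unfold Pa G1
    rfl
  have hB : B = A + t := rfl
  linear_combination (1 - v) * master + u * t * hgeo1 + t * hgeo2 + (Pa (a+1) v) * hB


lemma ccX (i : Fin 3) : MvPowerSeries.constantCoeff (MvPowerSeries.X i) = 0 :=
  MvPowerSeries.constantCoeff_X i

lemma ccΔ (k : ℕ) : MvPowerSeries.constantCoeff (Δ k) = 1 := by
  have hcc : ∀ i : Fin 3, MvPowerSeries.constantCoeff (MvPowerSeries.X i) = 0 :=
    MvPowerSeries.constantCoeff_X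
  simp [Δ, u, y, t, hcc]

lemma ccΔ_ne (k : ℕ) : MvPowerSeries.constantCoeff (Δ k) ≠ 0 := by
  rw [ccΔ]; norm_num

lemma Δ_ne (k : ℕ) : Δ k ≠ 0 := by
  intro h
  have := ccΔ k
  rw [h, map_zero] at this
  norm_num at this

lemma hinv (k : ℕ) : Δ k * (Δ k)⁻¹ = 1 := MvPowerSeries.mul_inv_cancel _ (ccΔ_ne k)

lemma ΔAB (k : ℕ) : Δ k = A ^ k * (1 - u) + u * B ^ k := by
  simp only [Δ, B, A]
  ring

lemma Δrec (k : ℕ) : Δ (k+1) = A * Δ k + u * t * B ^ k := by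
  rw [ΔAB, ΔAB]
  rw [pow_succ, pow_succ]
  simp only [B, A]
  ring

lemma Δ0 : Δ 0 = 1 := by
  unfold Δ; norm_num

noncomputable def zk (k : ℕ) : MvPowerSeries (Fin 3) ℚ := B ^ k * (Δ k)⁻¹
noncomputable def Vk (k : ℕ) : MvPowerSeries (Fin 3) ℚ := B * Δ k * (Δ (k+1))⁻¹

lemma hz (k : ℕ) : zk k * Δ k = B ^ k := by
  unfold zk
  rw [mul_assoc, mul_comm (Δ k)⁻¹ (Δ k), hinv, mul_one]

lemma hV (k : ℕ) : Vk k * Δ (k+1) = B * Δ k := by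
  unfold Vk
  rw [mul_assoc, mul_comm (Δ (k+1))⁻¹ (Δ (k+1)), hinv, mul_one]

lemma hVz (k : ℕ) : Vk k * zk k = zk (k+1) := by
  have h : (Vk k * zk k) * (Δ (k+1) * Δ k) = zk (k+1) * (Δ (k+1) * Δ k) := by
    calc (Vk k * zk k) * (Δ (k+1) * Δ k) = (Vk k * Δ (k+1)) * (zk k * Δ k) := by ring
    _ = (B * Δ k) * B ^ k := by rw [hV, hz]
    _ = (zk (k+1) * Δ (k+1)) * Δ k := by rw [hz (k+1), pow_succ]; ring
    _ = zk (k+1) * (Δ (k+1) * Δ k) := by ring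
  exact mul_right_cancel₀ (mul_ne_zero (Δ_ne (k+1)) (Δ_ne k)) h

lemma hkernel (k : ℕ) : B - A * Vk k = u * t * zk (k+1) := by
  have h : (B - A * Vk k) * Δ (k+1) = (u * t * zk (k+1)) * Δ (k+1) := by
    rw [sub_mul, mul_assoc, hV, mul_assoc, hz (k+1)]
    linear_combination B * Δrec k
  exact mul_right_cancel₀ (Δ_ne (k+1)) h

lemma Vm1 (n : ℕ) : Vk n - 1 = t * (1 - u) * A^n * (Δ (n+1))⁻¹ := by
  have h : (Vk n - 1) * Δ (n+1) = (t * (1 - u) * A^n * (Δ (n+1))⁻¹) * Δ (n+1) := by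
    rw [sub_mul, hV n, one_mul,
      show (t * (1-u) * A^n * (Δ (n+1))⁻¹) * Δ (n+1)
        = (t*(1-u)*A^n) * ((Δ (n+1))⁻¹ * Δ (n+1)) from by ring,
      MvPowerSeries.inv_mul_cancel _ (ccΔ_ne (n+1)), mul_one, Δrec n, ΔAB n]
    simp only [B, A]
    ring
  exact mul_right_cancel₀ (Δ_ne (n+1)) h

lemma ΓB (i : ℕ) : Γ i = u * B^i * (Δ i)⁻¹ := by
  unfold Γ
  rw [show (1 + t - t*y : MvPowerSeries (Fin 3) ℚ) = B from by simp only [B, A]; ring]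

lemma z0 : zk 0 = 1 := by
  unfold zk
  rw [pow_zero, one_mul, Δ0, inv_one]

noncomputable def H (k M : ℕ) : MvPowerSeries (Fin 3) ℚ :=
  ∑ a ∈ Finset.range (M+1), G1 a * (zk k)^a

lemma t_ne : t ≠ 0 := fun h => by
  have h1 : MvPowerSeries.coeff (Finsupp.single 2 1) t = 1 := by
    rw [show t = MvPowerSeries.X 2 from rfl, MvPowerSeries.coeff_X, if_pos rfl]
  rw [h, map_zero] at h1
  norm_num at h1

lemma d0 (k : ℕ) : t * G1 0
    = u * t * zk (k+1) * Pa 0 (Vk k) - t + t * Vk k := by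
  linear_combination (-1 : MvPowerSeries (Fin 3) ℚ) * dagger0 (Vk k)
    + (Pa 0 (Vk k)) * hkernel k

lemma dS (k a : ℕ) : t * G1 (a+1)
    = u * t * zk (k+1) * Pa (a+1) (Vk k) - u * t * Vk k * Pa a (Vk k)
      + u * t * (Vk k)^(a+2) * G1 a := by
  linear_combination (-1 : MvPowerSeries (Fin 3) ℚ) * daggerS a (Vk k)
    + (Pa (a+1) (Vk k)) * hkernel k

lemma Hbase (k : ℕ) : H k 0 = (Vk k - 1) + u * Vk k * zk k * Pa 0 (Vk k) := by
  apply mul_left_cancel₀ t_ne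
  unfold H
  rw [Finset.sum_range_one, pow_zero, mul_one]
  linear_combination d0 k - (u * t * Pa 0 (Vk k)) * hVz k

lemma Hstep (k M : ℕ) : H k (M+1) = (Vk k - 1) + u * (Vk k)^2 * zk k * H (k+1) M
    + u * Vk k * (zk k)^(M+2) * Pa (M+1) (Vk k) := by
  apply mul_left_cancel₀ t_ne
  have hp : ∀ i : ℕ, (zk (k+1))^i = (Vk k)^i * (zk k)^i := by
    intro i
    rw [← mul_pow, hVz k]
  have hsummand : ∀ i ∈ Finset.range (M+1), t * (G1 (i+1) * (zk k)^(i+1))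
      = ((fun i => u * t * zk (k+1) * Pa i (Vk k) * (zk k)^i) (i+1)
          - (fun i => u * t * zk (k+1) * Pa i (Vk k) * (zk k)^i) i)
        + u * t * (Vk k)^2 * zk k * (G1 i * (zk (k+1))^i) := by
    intro i _
    simp only
    linear_combination ((zk k)^(i+1)) * dS k i
      - (u * t * Pa i (Vk k) * (zk k)^i) * hVz k
      - (u * t * (Vk k)^2 * zk k * G1 i) * hp i
  calc t * H k (M+1)
      = ∑ i ∈ Finset.range (M+1), (t * (G1 (i+1) * (zk k)^(i+1)))
          + t * (G1 0 * (zk k)^0) := by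
        unfold H
        rw [Finset.mul_sum, Finset.sum_range_succ' (fun a => t * (G1 a * (zk k)^a)) (M+1)]
    _ = (∑ i ∈ Finset.range (M+1),
          (((fun i => u * t * zk (k+1) * Pa i (Vk k) * (zk k)^i) (i+1)
            - (fun i => u * t * zk (k+1) * Pa i (Vk k) * (zk k)^i) i)
          + u * t * (Vk k)^2 * zk k * (G1 i * (zk (k+1))^i)))
          + t * (G1 0 * (zk k)^0) := by
        rw [Finset.sum_congr rfl hsummand]
    _ = (u * t * zk (k+1) * Pa (M+1) (Vk k) * (zk k)^(M+1)
          - u * t * zk (k+1) * Pa 0 (Vk k) * (zk k)^0)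
        + u * t * (Vk k)^2 * zk k * H (k+1) M + t * (G1 0 * (zk k)^0) := by
        rw [Finset.sum_add_distrib, Finset.sum_range_sub
          (fun i => u * t * zk (k+1) * Pa i (Vk k) * (zk k)^i) (M+1), ← Finset.mul_sum]
        unfold H
        ring
    _ = t * ((Vk k - 1) + u * (Vk k)^2 * zk k * H (k+1) M
          + u * Vk k * (zk k)^(M+2) * Pa (M+1) (Vk k)) := by
        rw [pow_zero]
        linear_combination d0 k - (u * t * Pa (M+1) (Vk k) * (zk k)^(M+1)) * hVz k

noncomputable def Cpart (k n : ℕ) : MvPowerSeries (Fin 3) ℚ :=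
  ∏ j ∈ Finset.range n, (u * (Vk (k+j))^2 * zk (k+j))

noncomputable def mains (k M : ℕ) : MvPowerSeries (Fin 3) ℚ :=
  ∑ n ∈ Finset.range (M+1), Cpart k n * (Vk (k+n) - 1)

lemma CpartΓ (n : ℕ) : Cpart 0 n = B^n * (∏ i ∈ Finset.Icc 1 n, Γ i) * (Δ n)⁻¹ := by
  induction n with
  | zero =>
    unfold Cpart
    rw [Finset.prod_range_zero, pow_zero, one_mul,
      show (Finset.Icc 1 0 : Finset ℕ) = ∅ from Finset.Icc_eq_empty (by omega),
      Finset.prod_empty, one_mul, Δ0, inv_one]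
  | succ n ih =>
    have hCs : Cpart 0 (n+1) = Cpart 0 n * (u * (Vk n)^2 * zk n) := by
      unfold Cpart
      rw [Finset.prod_range_succ]
      rw [Nat.zero_add]
    rw [hCs, ih, Finset.prod_Icc_succ_top (by omega : 1 ≤ n+1), ΓB (n+1)]
    unfold Vk zk
    linear_combination (u * B^(2*n+2) * (∏ i ∈ Finset.Icc 1 n, Γ i) * ((Δ (n+1))⁻¹)^2
      * (Δ n * (Δ n)⁻¹ + 1)) * hinv n


lemma Adef : A = 1 - t * y := rfl

lemma Bdef : B = 1 + t - t * y := by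
  simp only [B, A]
  ring

attribute [irreducible] Δ zk Vk A B u y t Γ

def Udiv (d : ℕ) (f : MvPowerSeries (Fin 3) ℚ) : Prop :=
  ∀ m : Fin 3 →₀ ℕ, m 0 < d → MvPowerSeries.coeff m f = 0

lemma Udiv_mul {d e : ℕ} {f h : MvPowerSeries (Fin 3) ℚ}
    (hf : Udiv d f) (hh : Udiv e h) : Udiv (d+e) (f * h) := by
  intro m hm
  classical
  rw [MvPowerSeries.coeff_mul]
  apply Finset.sum_eq_zero
  intro p hp
  rw [Finset.HasAntidiagonal.mem_antidiagonal] at hp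
  have happ : p.1 0 + p.2 0 = m 0 := by
    rw [← hp]; rfl
  rcases Nat.lt_or_ge (p.1 0) d with hc | hc
  · rw [hf p.1 hc, zero_mul]
  · rw [hh p.2 (by omega), mul_zero]

lemma Udiv_mul_left {d : ℕ} {f h : MvPowerSeries (Fin 3) ℚ}
    (hf : Udiv d f) : Udiv d (f * h) := by
  have := Udiv_mul hf (fun m hm => absurd hm (Nat.not_lt_zero _) : Udiv 0 h)
  simpa using this

lemma Udiv_mul_right {d : ℕ} {f h : MvPowerSeries (Fin 3) ℚ}
    (hh : Udiv d h) : Udiv d (f * h) := by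
  intro m hm
  rw [mul_comm]
  exact Udiv_mul_left hh m hm

lemma Udiv_u : Udiv 1 u := by
  intro m hm
  unfold u
  rw [MvPowerSeries.coeff_X]
  have : m ≠ Finsupp.single 0 1 := by
    intro h
    rw [h] at hm
    rw [show (Finsupp.single (0 : Fin 3) 1 : Fin 3 →₀ ℕ) 0 = 1 from by
      rw [Finsupp.single_apply, if_pos rfl]] at hm
    omega
  rw [if_neg this]

lemma Udiv_add {d : ℕ} {f h : MvPowerSeries (Fin 3) ℚ}
    (hf : Udiv d f) (hh : Udiv d h) : Udiv d (f + h) := by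
  intro m hm
  rw [map_add, hf m hm, hh m hm, add_zero]

lemma Udiv_g (x a : ℕ) : Udiv a (g x a) := by
  intro m hm
  rw [coeff_g, if_neg (by omega)]

lemma Udiv_sum {d : ℕ} {s : Finset ℕ} {f : ℕ → MvPowerSeries (Fin 3) ℚ}
    (h : ∀ i ∈ s, Udiv d (f i)) : Udiv d (∑ i ∈ s, f i) := by
  intro m hm
  rw [map_sum]
  exact Finset.sum_eq_zero (fun i hi => h i hi m hm)

lemma Udiv_Pa (a : ℕ) (v : MvPowerSeries (Fin 3) ℚ) : Udiv a (Pa a v) := by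
  unfold Pa
  exact Udiv_sum (fun x _ => Udiv_mul_left (Udiv_g x a))


set_option maxHeartbeats 1000000 in
lemma unroll : ∀ M k, ∃ E, H k M = mains k M + E ∧ Udiv (M+1) E := by
  intro M
  induction M with
  | zero =>
    intro k
    refine ⟨u * Vk k * zk k * Pa 0 (Vk k), ?_, ?_⟩
    · rw [Hbase k]
      unfold mains Cpart
      rw [Finset.sum_range_one, Finset.prod_range_zero, one_mul, Nat.add_zero]
    · exact Udiv_mul_left (Udiv_mul_left (Udiv_mul_left Udiv_u))
  | succ M ih =>
    intro k
    obtain ⟨E', hE', hU'⟩ := ih (k+1)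
    refine ⟨u * (Vk k)^2 * zk k * E' + u * Vk k * (zk k)^(M+2) * Pa (M+1) (Vk k), ?_, ?_⟩
    · rw [Hstep k M, hE']
      have hC : ∀ n, Cpart k (n+1) = (u * (Vk k)^2 * zk k) * Cpart (k+1) n := by
        intro n
        unfold Cpart
        rw [Finset.prod_range_succ' (fun j => u * (Vk (k+j))^2 * zk (k+j)) n]
        rw [Nat.add_zero, mul_comm]
        congr 1
        apply Finset.prod_congr rfl
        intro j _
        have hj : k + (j+1) = (k+1) + j := by omega
        rw [hj]
      unfold mains
      rw [Finset.sum_range_succ' (fun n => Cpart k n * (Vk (k+n) - 1)) (M+1)]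
      have hterm : ∀ n ∈ Finset.range (M+1),
          Cpart k (n+1) * (Vk (k+(n+1)) - 1)
            = (u * (Vk k)^2 * zk k) * (Cpart (k+1) n * (Vk ((k+1)+n) - 1)) := by
        intro n _
        rw [hC n, show k + (n+1) = (k+1)+n from by omega]
        ring
      rw [Finset.sum_congr rfl hterm, ← Finset.mul_sum]
      have hC0 : Cpart k 0 = 1 := by unfold Cpart; rw [Finset.prod_range_zero]
      rw [hC0, Nat.add_zero, one_mul]
      generalize (∑ n ∈ Finset.range (M+1), Cpart (k+1) n * (Vk (k+1+n) - 1)) = SS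
      ring
    · apply Udiv_add
      · have h1 : Udiv 1 (u * (Vk k)^2 * zk k) :=
          Udiv_mul_left (Udiv_mul_left Udiv_u)
        have h2 := Udiv_mul h1 hU'
        have h3 : 1 + (M+1) = M+1+1 := by omega
        rw [h3] at h2
        exact h2
      · have h1 : Udiv 1 (u * Vk k * (zk k)^(M+2)) :=
          Udiv_mul_left (Udiv_mul_left Udiv_u)
        have h2 := Udiv_mul h1 (Udiv_Pa (M+1) (Vk k))
        have h3 : 1 + (M+1) = M+1+1 := by omega
        rw [h3] at h2
        exact h2


lemma coeff_F (m : Fin 3 →₀ ℕ) :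
    MvPowerSeries.coeff m F
      = (((AS (m 2)).filter (fun l => ascList l = m 0 ∧ adjpairs l = m 1)).card : ℚ) := by
  have h0 : MvPowerSeries.coeff m F = (Nat.card {l : List ℕ // l.length = m 2 ∧
      IsAscentSeq l ∧ ascList l = m 0 ∧ adjpairs l = m 1} : ℚ) := rfl
  rw [h0]
  congr 1
  rw [← Nat.card_eq_finsetCard]
  apply Nat.card_congr
  apply Equiv.subtypeEquivRight
  intro l
  simp only [Finset.mem_filter, mem_AS]
  tauto

lemma partition (a b n : ℕ) (hn : 1 ≤ n) :
    ((AS n).filter (fun l => ascList l = a ∧ adjpairs l = b)).card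
      = ∑ x ∈ Finset.range (a+1), gc x a b n := by
  rw [Finset.card_eq_sum_card_fiberwise (f := lst) (t := Finset.range (a+1))
    (fun l hl => by
      rw [Finset.mem_coe, Finset.mem_filter] at hl
      rw [Finset.mem_coe, Finset.mem_range]
      have hne : l ≠ [] := by
        intro he
        have := AS_length hl.1
        rw [he] at this
        simp at this
        omega
      have := lst_le_asc l ((mem_AS _ l).mp hl.1).2 hne
      omega)]
  apply Finset.sum_congr rfl
  intro x _
  unfold gc
  congr 1
  rw [Finset.filter_filter]
  apply Finset.filter_congr
  intro l _
  simp only [eq_iff_iff, and_assoc]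

lemma eq_zero_iff (m : Fin 3 →₀ ℕ) : m = 0 ↔ m 0 = 0 ∧ m 1 = 0 ∧ m 2 = 0 := by
  constructor
  · rintro rfl
    exact ⟨rfl, rfl, rfl⟩
  · rintro ⟨h0, h1, h2⟩
    ext j
    fin_cases j <;> simpa [*]

lemma coeff_G1 (a : ℕ) (m : Fin 3 →₀ ℕ) :
    MvPowerSeries.coeff m (G1 a)
      = if m 0 = a ∧ 1 ≤ m 2
        then ((∑ x ∈ Finset.range (a+1), gc x a (m 1) (m 2) : ℕ) : ℚ) else 0 := by
  unfold G1
  rw [map_sum]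
  exact coeff_g_sum (Finset.range (a+1)) a m

lemma coeffF_eq (m : Fin 3 →₀ ℕ) (N : ℕ) (hN : m 0 ≤ N) :
    MvPowerSeries.coeff m F
      = MvPowerSeries.coeff m (1 + ∑ a ∈ Finset.range (N+1), G1 a) := by
  rw [map_add, map_sum, coeff_F]
  simp only [coeff_G1]
  rcases Nat.eq_zero_or_pos (m 2) with hm2 | hm2
  · rw [hm2]
    have hAS0 : AS 0 = {([] : List ℕ)} := rfl
    rw [hAS0, Finset.filter_singleton]
    have hasc : ascList [] = 0 := rfl
    have hadj : adjpairs [] = 0 := rfl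
    rw [hasc, hadj]
    rw [Finset.sum_eq_zero (fun a _ => by rw [if_neg (by omega)])]
    rw [MvPowerSeries.coeff_one]
    by_cases h : (0 : ℕ) = m 0 ∧ (0 : ℕ) = m 1
    · rw [if_pos h, if_pos ((eq_zero_iff m).mpr ⟨h.1.symm, h.2.symm, hm2⟩)]
      norm_num
    · rw [if_neg h, if_neg (fun hc => h (by
        rw [eq_zero_iff] at hc
        exact ⟨hc.1.symm, hc.2.1.symm⟩))]
      norm_num
  · rw [MvPowerSeries.coeff_one, if_neg (fun hc => by
      rw [eq_zero_iff] at hc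
      omega), zero_add]
    rw [Finset.sum_eq_single (m 0)]
    · rw [if_pos ⟨rfl, hm2⟩, partition (m 0) (m 1) (m 2) hm2]
    · intro a _ ha
      rw [if_neg (by omega)]
    · intro h
      exfalso
      exact h (Finset.mem_range.mpr (by omega))

lemma H0N (N : ℕ) : H 0 N = ∑ a ∈ Finset.range (N+1), G1 a := by
  unfold H
  apply Finset.sum_congr rfl
  intro a _
  rw [z0, one_pow, mul_one]

lemma sum_split {R : Type*} [AddCommMonoid R] (f : ℕ → R) (N : ℕ) :
    ∑ n ∈ Finset.range (N+1), f n = f 0 + ∑ n ∈ Finset.Icc 1 N, f n := by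
  induction N with
  | zero =>
    rw [Finset.sum_range_one, show (Finset.Icc 1 0 : Finset ℕ) = ∅ from
      Finset.Icc_eq_empty (by omega), Finset.sum_empty, add_zero]
  | succ N ih =>
    rw [Finset.sum_range_succ, ih, Finset.sum_Icc_succ_top (by omega : 1 ≤ N+1), add_assoc]

lemma mains0 (N : ℕ) : mains 0 N = ∑ n ∈ Finset.range (N+1), Cpart 0 n * (Vk n - 1) := by
  unfold mains
  apply Finset.sum_congr rfl
  intro n _
  rw [Nat.zero_add]

lemma rhs_eq (N : ℕ) :
    (1 + t * (1 - u) * (Δ 1)⁻¹ +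
      ∑ n ∈ Finset.Icc 1 N,
        t * (1 - u) * (1 - t * y) ^ n * (1 + t - t * y) ^ n *
          (∏ i ∈ Finset.Icc 1 n, Γ i) * (Δ n)⁻¹ * (Δ (n + 1))⁻¹)
      = 1 + mains 0 N := by
  rw [mains0, sum_split (fun n => Cpart 0 n * (Vk n - 1)) N]
  have hterm0 : Cpart 0 0 * (Vk 0 - 1) = t * (1 - u) * (Δ 1)⁻¹ := by
    have hC0 : Cpart 0 0 = 1 := by unfold Cpart; rw [Finset.prod_range_zero]
    rw [hC0, one_mul, Vm1 0, pow_zero]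
    ring
  rw [hterm0, add_assoc]
  congr 1
  congr 1
  apply Finset.sum_congr rfl
  intro n _
  rw [CpartΓ n, Vm1 n, ← Adef, ← Bdef]
  ring

theorem stmt_9' (m : Fin 3 →₀ ℕ) (N : ℕ) (hN : m 0 ≤ N) :
    MvPowerSeries.coeff m F =
      MvPowerSeries.coeff m
        (1 + t * (1 - u) * (Δ 1)⁻¹ +
          ∑ n ∈ Finset.Icc 1 N,
            t * (1 - u) * (1 - t * y) ^ n * (1 + t - t * y) ^ n *
              (∏ i ∈ Finset.Icc 1 n, Γ i) * (Δ n)⁻¹ * (Δ (n + 1))⁻¹) := by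
  obtain ⟨E, hE, hU⟩ := unroll N 0
  rw [rhs_eq N, coeffF_eq m N hN, ← H0N N, hE, map_add, map_add, map_add,
    hU m (by omega), add_zero]



/-- `F = 1 + t(1−u)Δ₁⁻¹ + Σ_{n≥1} t(1−u)(1−ty)ⁿ(1+t−ty)ⁿ Γ₁⋯Γ_n Δ_n⁻¹Δ_{n+1}⁻¹`,
coefficientwise (the `n`-th summand is divisible by `u^n`, so the coefficient at a
monomial with `u`-exponent `m 0` is captured by any partial sum with `N ≥ m 0`). -/
theorem stmt_9 (m : Fin 3 →₀ ℕ) (N : ℕ) (hN : m 0 ≤ N) :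
    MvPowerSeries.coeff m F =
      MvPowerSeries.coeff m
        (1 + t * (1 - u) * (Δ 1)⁻¹ +
          ∑ n ∈ Finset.Icc 1 N,
            t * (1 - u) * (1 - t * y) ^ n * (1 + t - t * y) ^ n *
              (∏ i ∈ Finset.Icc 1 n, Γ i) * (Δ n)⁻¹ * (Δ (n + 1))⁻¹) :=
  stmt_9' m N hN

end Stmt9
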